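/- Asymptotics of the touchdown profile: let A > 0, q ∈ (0,1), κ > 0, θϰ > 0, and let g ∈ C²(0,1) be positive strictly decreasing with g(1⁻)=0 and g'(g⁻¹(w)) = -A·w^q(1+o(1)) as w → 0⁺. If x: [T,∞) → ℝ satisfies x(t) = o(e^{-θϰt}) as t → ∞, then v(t) = g⁻¹(κe^{-θϰt} + x(t)) satisfies v(t) = 1 − (κ^{1-q}/(A(1-q)))·e^{-θϰ(1-q)t} + o(e^{-θϰ(1-q)t}) as t → +∞. -/

import Mathlib

open Real Set Filter Asymptotics

/-- asymptotics of the touchdown profile. Let `A > 0`,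
`q ∈ (0,1)`, `κ > 0`, `θϰ > 0` (denoted `tk`), and let `g ∈ C²(0,1)` be
positive, strictly decreasing, `g(1⁻) = 0`, with inverse `ginv` near `1` and
`g'(g⁻¹(w)) = -A w^q (1+o(1))` as `w → 0⁺`. If `x(t) = o(e^{-θϰ t})` as
`t → ∞`, then `v(t) = g⁻¹(κ e^{-θϰ t} + x(t))` satisfies
`v(t) = 1 - (κ^{1-q}/(A(1-q))) e^{-θϰ(1-q)t} + o(e^{-θϰ(1-q)t})`. -/
theorem stmt19 (g ginv : ℝ → ℝ) (A q κ tk : ℝ)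
    (hA : 0 < A) (hq : q ∈ Set.Ioo (0:ℝ) 1) (hκ : 0 < κ) (htk : 0 < tk)
    (hC2 : ContDiffOn ℝ 2 g (Set.Ioo 0 1))
    (hpos : ∀ u ∈ Set.Ioo (0:ℝ) 1, 0 < g u)
    (hanti : StrictAntiOn g (Set.Ioo 0 1))
    (hlim : Filter.Tendsto g (nhdsWithin 1 (Set.Iio 1)) (nhds 0))
    (hginv : ∀ᶠ w in nhdsWithin 0 (Set.Ioi 0),
      ginv w ∈ Set.Ioo (0:ℝ) 1 ∧ g (ginv w) = w)
    (hginvlim : Filter.Tendsto ginv (nhdsWithin 0 (Set.Ioi 0))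
      (nhdsWithin 1 (Set.Iio 1)))
    (hasymp : Filter.Tendsto (fun w => deriv g (ginv w) / (-(A * w ^ q)))
      (nhdsWithin 0 (Set.Ioi 0)) (nhds 1))
    (x : ℝ → ℝ)
    (hx : (fun t => x t) =o[Filter.atTop] fun t => Real.exp (-tk * t)) :
    (fun t => ginv (κ * Real.exp (-tk * t) + x t) -
        (1 - κ ^ (1 - q) / (A * (1 - q)) * Real.exp (-(tk * (1 - q)) * t)))
      =o[Filter.atTop] fun t => Real.exp (-(tk * (1 - q)) * t) := by
  obtain ⟨hq0, hq1⟩ := hq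
  have hb : 0 < 1 - q := by linarith
  have hcpos : 0 < A * (1 - q) := by positivity
  -- membership of Ioo 0 1 near 1 from the left
  have hgpos : ∀ᶠ u in nhdsWithin (1:ℝ) (Set.Iio 1), u ∈ Set.Ioo (0:ℝ) 1 :=
    Ioo_mem_nhdsLT_of_mem (by constructor <;> norm_num)
  -- g tends to 0 from above
  have hgu : Tendsto g (nhdsWithin (1:ℝ) (Set.Iio 1)) (nhdsWithin (0:ℝ) (Set.Ioi 0)) :=
    tendsto_nhdsWithin_iff.mpr ⟨hlim, hgpos.mono fun u hu => hpos u hu⟩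
  -- ginv ∘ g = id near 1⁻
  have hev1 : ∀ᶠ u in nhdsWithin (1:ℝ) (Set.Iio 1), ginv (g u) = u := by
    filter_upwards [hgu.eventually hginv, hgpos] with u hu hu2
    exact hanti.injOn hu.1 hu2 hu.2
  -- transfer the asymptotic hypothesis to the u variable
  have L1 : Tendsto (fun u => deriv g u / (-(A * (g u) ^ q)))
      (nhdsWithin (1:ℝ) (Set.Iio 1)) (nhds 1) := by
    refine (hasymp.comp hgu).congr' ?_
    filter_upwards [hev1] with u hu
    simp [Function.comp, hu]
  -- derivative facts
  have hdg : ∀ᶠ u in nhdsWithin (1:ℝ) (Set.Iio 1), HasDerivAt g (deriv g u) u := by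
    filter_upwards [hgpos] with u hu
    exact ((hC2.differentiableOn two_ne_zero).differentiableAt
      (isOpen_Ioo.mem_nhds hu)).hasDerivAt
  have hG : ∀ᶠ u in nhdsWithin (1:ℝ) (Set.Iio 1),
      HasDerivAt (fun u => g u ^ (1 - q)) (deriv g u * (1 - q) * g u ^ (1 - q - 1)) u := by
    filter_upwards [hdg, hgpos] with u hu hu2
    exact hu.rpow_const (Or.inl (hpos u hu2).ne')
  -- the derivative ratio tends to -(A(1-q))
  have keyd : ∀ᶠ u in nhdsWithin (1:ℝ) (Set.Iio 1),
      -(A * (1 - q)) * (deriv g u / (-(A * (g u) ^ q)))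
        = deriv g u * (1 - q) * g u ^ (1 - q - 1) / 1 := by
    filter_upwards [hgpos] with u hu
    have hgu0 : 0 < g u := hpos u hu
    have h1 : g u ^ (1 - q - 1) = (g u ^ q)⁻¹ := by
      rw [show (1 - q - 1 : ℝ) = -q by ring, Real.rpow_neg hgu0.le]
    have h2 : (g u ^ q) ≠ 0 := (Real.rpow_pos_of_pos hgu0 q).ne'
    rw [h1]
    field_simp
  have hdiv : Tendsto (fun u => deriv g u * (1 - q) * g u ^ (1 - q - 1) / 1)
      (nhdsWithin (1:ℝ) (Set.Iio 1)) (nhds (-(A * (1 - q)))) := by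
    have : Tendsto (fun u => -(A * (1 - q)) * (deriv g u / (-(A * (g u) ^ q))))
        (nhdsWithin (1:ℝ) (Set.Iio 1)) (nhds (-(A * (1 - q)) * 1)) :=
      tendsto_const_nhds.mul L1
    rw [mul_one] at this
    exact this.congr' keyd
  -- numerator and denominator tend to 0
  have hGlim : Tendsto (fun u => g u ^ (1 - q)) (nhdsWithin (1:ℝ) (Set.Iio 1)) (nhds 0) := by
    have hc : ContinuousAt (fun y : ℝ => y ^ (1 - q)) 0 :=
      Real.continuousAt_rpow_const 0 _ (Or.inr hb.le)
    have := hc.tendsto.comp (hgu.mono_right nhdsWithin_le_nhds)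
    simpa [Function.comp_def, Real.zero_rpow hb.ne'] using this
  have hden : ∀ᶠ u in nhdsWithin (1:ℝ) (Set.Iio 1),
      HasDerivAt (fun u : ℝ => u - 1) 1 u :=
    Eventually.of_forall fun u => (hasDerivAt_id u).sub_const 1
  have hdenlim : Tendsto (fun u : ℝ => u - 1) (nhdsWithin (1:ℝ) (Set.Iio 1)) (nhds 0) := by
    have : Tendsto (fun u : ℝ => u - 1) (nhds 1) (nhds (1 - 1)) :=
      (continuous_id.sub continuous_const).tendsto 1
    rw [sub_self] at this
    exact tendsto_nhdsWithin_of_tendsto_nhds this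
  -- L'Hôpital
  have lhop : Tendsto (fun u => g u ^ (1 - q) / (u - 1))
      (nhdsWithin (1:ℝ) (Set.Iio 1)) (nhds (-(A * (1 - q)))) :=
    HasDerivAt.lhopital_zero_nhdsLT hG hden
      (Eventually.of_forall fun _ => one_ne_zero) hGlim hdenlim hdiv
  -- ratio tends to 1
  have hrat : Tendsto (fun u => (1 - u) * (A * (1 - q)) / g u ^ (1 - q))
      (nhdsWithin (1:ℝ) (Set.Iio 1)) (nhds 1) := by
    have h2 : Tendsto (fun u => (-(A * (1 - q))) / (g u ^ (1 - q) / (u - 1)))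
        (nhdsWithin (1:ℝ) (Set.Iio 1))
        (nhds ((-(A * (1 - q))) / (-(A * (1 - q))))) :=
      tendsto_const_nhds.div lhop (by simpa using hcpos.ne')
    rw [div_self (by simpa using hcpos.ne')] at h2
    refine h2.congr fun u => ?_
    rw [div_div_eq_mul_div]
    congr 1
    ring
  -- substitute u = ginv w
  have hS : Tendsto (fun w => (1 - ginv w) * (A * (1 - q)) / w ^ (1 - q))
      (nhdsWithin (0:ℝ) (Set.Ioi 0)) (nhds 1) := by
    refine (hrat.comp hginvlim).congr' ?_
    filter_upwards [hginv] with w hw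
    simp [Function.comp, hw.2]
  -- time-dependent setup
  have hepos : ∀ t : ℝ, 0 < Real.exp (-tk * t) := fun t => Real.exp_pos _
  have hx0 : Tendsto (fun t => x t / Real.exp (-tk * t)) atTop (nhds 0) := by
    rw [isLittleO_iff_tendsto (fun t h => absurd h (hepos t).ne')] at hx
    exact hx
  have hwe : Tendsto (fun t => (κ * Real.exp (-tk * t) + x t) / Real.exp (-tk * t))
      atTop (nhds κ) := by
    have heq : ∀ t, (κ * Real.exp (-tk * t) + x t) / Real.exp (-tk * t)
        = κ + x t / Real.exp (-tk * t) := fun t => by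
      field_simp
    rw [funext heq]
    simpa using tendsto_const_nhds.add hx0
  have helim : Tendsto (fun t : ℝ => Real.exp (-tk * t)) atTop (nhds 0) := by
    apply Real.tendsto_exp_atBot.comp
    exact tendsto_id.const_mul_atTop_of_neg (by linarith)
  have hwpos : ∀ᶠ t in atTop, 0 < κ * Real.exp (-tk * t) + x t := by
    filter_upwards [hwe.eventually (eventually_gt_nhds hκ)] with t ht
    have := mul_pos ht (hepos t)
    rwa [div_mul_cancel₀ _ (hepos t).ne'] at this
  have hwlim : Tendsto (fun t => κ * Real.exp (-tk * t) + x t) atTop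
      (nhdsWithin (0:ℝ) (Set.Ioi 0)) := by
    rw [tendsto_nhdsWithin_iff]
    refine ⟨?_, hwpos⟩
    have heq : (fun t => κ * Real.exp (-tk * t) + x t)
        = fun t => ((κ * Real.exp (-tk * t) + x t) / Real.exp (-tk * t))
            * Real.exp (-tk * t) := by
      funext t
      rw [div_mul_cancel₀ _ (hepos t).ne']
    rw [heq]
    simpa using hwe.mul helim
  -- P : main ratio along trajectory
  have P : Tendsto (fun t => (1 - ginv (κ * Real.exp (-tk * t) + x t)) * (A * (1 - q))
      / (κ * Real.exp (-tk * t) + x t) ^ (1 - q)) atTop (nhds 1) := hS.comp hwlim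
  -- Q : rpow of w over E
  have hEeq : ∀ t : ℝ, Real.exp (-(tk * (1 - q)) * t) = Real.exp (-tk * t) ^ (1 - q) := by
    intro t
    rw [← Real.exp_mul]
    congr 1
    ring
  have hQ : Tendsto (fun t => (κ * Real.exp (-tk * t) + x t) ^ (1 - q)
      / Real.exp (-(tk * (1 - q)) * t)) atTop (nhds (κ ^ (1 - q))) := by
    have hcont : ContinuousAt (fun y : ℝ => y ^ (1 - q)) κ :=
      Real.continuousAt_rpow_const κ _ (Or.inl hκ.ne')
    refine (hcont.tendsto.comp hwe).congr' ?_
    filter_upwards [hwpos] with t ht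
    have hdd : ((κ * Real.exp (-tk * t) + x t) / Real.exp (-tk * t)) ^ (1 - q)
        = (κ * Real.exp (-tk * t) + x t) ^ (1 - q) / Real.exp (-tk * t) ^ (1 - q) :=
      Real.div_rpow ht.le (hepos t).le _
    show ((κ * Real.exp (-tk * t) + x t) / Real.exp (-tk * t)) ^ (1 - q) = _
    rw [hdd, hEeq t]
  -- combine P and Q
  have hPQ : Tendsto (fun t =>
      ((1 - ginv (κ * Real.exp (-tk * t) + x t)) * (A * (1 - q))
        / (κ * Real.exp (-tk * t) + x t) ^ (1 - q))
      * ((κ * Real.exp (-tk * t) + x t) ^ (1 - q) / Real.exp (-(tk * (1 - q)) * t))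
      / (A * (1 - q))) atTop (nhds (1 * κ ^ (1 - q) / (A * (1 - q)))) :=
    (P.mul hQ).div_const _
  have hR : Tendsto (fun t => (1 - ginv (κ * Real.exp (-tk * t) + x t))
      / Real.exp (-(tk * (1 - q)) * t)) atTop (nhds (κ ^ (1 - q) / (A * (1 - q)))) := by
    rw [one_mul] at hPQ
    refine hPQ.congr' ?_
    filter_upwards [hwpos] with t ht
    have h1 : (κ * Real.exp (-tk * t) + x t) ^ (1 - q) ≠ 0 :=
      (Real.rpow_pos_of_pos ht _).ne'
    have h2 : Real.exp (-(tk * (1 - q)) * t) ≠ 0 := (Real.exp_pos _).ne'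
    have gen : ∀ a c W E : ℝ, c ≠ 0 → W ≠ 0 → E ≠ 0 →
        a * c / W * (W / E) / c = a / E := by
      intros a c W E hc hW hE
      field_simp
    exact gen _ _ _ _ hcpos.ne' h1 h2
  -- final limit
  have hfin : Tendsto (fun t =>
      (ginv (κ * Real.exp (-tk * t) + x t)
        - (1 - κ ^ (1 - q) / (A * (1 - q)) * Real.exp (-(tk * (1 - q)) * t)))
      / Real.exp (-(tk * (1 - q)) * t)) atTop (nhds 0) := by
    have h0 : Tendsto (fun t => κ ^ (1 - q) / (A * (1 - q))
        - (1 - ginv (κ * Real.exp (-tk * t) + x t)) / Real.exp (-(tk * (1 - q)) * t))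
        atTop (nhds (κ ^ (1 - q) / (A * (1 - q)) - κ ^ (1 - q) / (A * (1 - q)))) :=
      tendsto_const_nhds.sub hR
    rw [sub_self] at h0
    refine h0.congr fun t => ?_
    have h2 : Real.exp (-(tk * (1 - q)) * t) ≠ 0 := (Real.exp_pos _).ne'
    have gen : ∀ v C E : ℝ, E ≠ 0 → C - (1 - v) / E = (v - (1 - C * E)) / E := by
      intros v C E hE
      field_simp
      ring
    exact gen _ _ _ h2
  rw [isLittleO_iff_tendsto (fun t h => absurd h (Real.exp_pos _).ne')]
  exact hfin
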